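/- Let f : [0,1]² → [0,1]² and π : [0,1]² → ℝ^5 be C^3, and let P = π(p) be a point such that π^{-1}(P) = {p} and the five vectors π_x(p), π_y(p), π_{xx}(p), π_{xy}(p), π_{yy}(p) are linearly independent in ℝ^5. Let p_0, p_1, … ∈ [0,1]² be a trajectory of f and P_i = π(p_i). If the set {P_0, P_1, …} ⊆ ℝ^5 has d distinct approach directions at P, then the set {p_0, p_1, …} ⊆ ℝ² has d distinct approach directions at p. -/

import Mathlib

open Set Filter Topology

/-- The unit square `[0,1]²` in the Euclidean plane. -/
def unitSq : Set (EuclideanSpace ℝ (Fin 2)) := {x | ∀ i, x i ∈ Set.Icc (0:ℝ) 1}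

/-- The standard basis direction `eₓ = (1,0)` of the plane. -/
noncomputable def ex : EuclideanSpace ℝ (Fin 2) := EuclideanSpace.single 0 1

/-- The standard basis direction `e_y = (0,1)` of the plane. -/
noncomputable def ey : EuclideanSpace ℝ (Fin 2) := EuclideanSpace.single 1 1

/-- A set `S` has the approach direction `l` (a unit vector) at the base point `P`. -/
def HasApproachDirection {E : Type*} [NormedAddCommGroup E] [NormedSpace ℝ E]
    (S : Set E) (P l : E) : Prop :=
  ‖l‖ = 1 ∧ ∃ Q : ℕ → E, (∀ k, Q k ∈ S) ∧ (∀ k, Q k ≠ P) ∧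
    Filter.Tendsto Q Filter.atTop (nhds P) ∧
    Filter.Tendsto (fun k => ‖Q k - P‖⁻¹ • (Q k - P)) Filter.atTop (nhds l)

/-- `S` has `d` distinct approach directions at `P`. -/
def HasDistinctApproachDirections {E : Type*} [NormedAddCommGroup E] [NormedSpace ℝ E]
    (S : Set E) (P : E) (d : ℕ) : Prop :=
  ∃ l : Fin d → E, (∀ i, HasApproachDirection S P (l i)) ∧
    ∀ i j, i ≠ j → l i ≠ l j ∧ l i ≠ -l j

lemma convex_unitSq : Convex ℝ unitSq := by
  intro x hx y hy a b ha hb hab i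
  have h := (convex_Icc (0:ℝ) 1) (hx i) (hy i) ha hb hab
  simpa [smul_eq_mul] using h

lemma isClosed_unitSq : IsClosed unitSq := by
  have : unitSq = ⋂ i, (EuclideanSpace.proj (𝕜 := ℝ) i) ⁻¹' Set.Icc (0:ℝ) 1 := by
    ext x; simp [unitSq]
  rw [this]
  exact isClosed_iInter fun i => isClosed_Icc.preimage (EuclideanSpace.proj i).continuous

lemma isCompact_unitSq : IsCompact unitSq := by
  have hsub : unitSq ⊆ Metric.closedBall 0 2 := by
    intro x hx
    rw [Metric.mem_closedBall, dist_zero_right, EuclideanSpace.norm_eq]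
    have hterm : ∀ i : Fin 2, ‖x i‖ ^ 2 ≤ 1 := by
      intro i
      have h := hx i
      have : ‖x i‖ ≤ 1 := by
        rw [Real.norm_eq_abs, abs_le]; exact ⟨by linarith [h.1], h.2⟩
      calc ‖x i‖ ^ 2 ≤ 1 ^ 2 := pow_le_pow_left₀ (norm_nonneg _) this 2
        _ = 1 := one_pow 2
    have hsum : (∑ i, ‖x i‖ ^ 2) ≤ 4 := by
      calc (∑ i, ‖x i‖ ^ 2) ≤ ∑ _i : Fin 2, (1:ℝ) := Finset.sum_le_sum fun i _ => hterm i
        _ = 2 := by simp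
        _ ≤ 4 := by norm_num
    calc Real.sqrt (∑ i, ‖x i‖ ^ 2) ≤ Real.sqrt 4 := Real.sqrt_le_sqrt hsum
      _ = 2 := by
          rw [show (4:ℝ) = 2 ^ 2 by norm_num, Real.sqrt_sq (by norm_num : (0:ℝ) ≤ 2)]
  exact (isCompact_closedBall (0 : EuclideanSpace ℝ (Fin 2)) 2).of_isClosed_subset
    isClosed_unitSq hsub

lemma interior_unitSq_nonempty : (interior unitSq).Nonempty := by
  refine ⟨(1/2 : ℝ) • (ex + ey), ?_⟩
  rw [mem_interior]
  refine ⟨{x : EuclideanSpace ℝ (Fin 2) | ∀ i, x i ∈ Set.Ioo (0:ℝ) 1}, ?_, ?_, ?_⟩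
  · intro x hx i; exact Set.Ioo_subset_Icc_self (hx i)
  · have : {x : EuclideanSpace ℝ (Fin 2) | ∀ i, x i ∈ Set.Ioo (0:ℝ) 1}
        = ⋂ i, (EuclideanSpace.proj (𝕜 := ℝ) i) ⁻¹' Set.Ioo (0:ℝ) 1 := by
      ext x; simp
    rw [this]
    exact isOpen_iInter_of_finite fun i =>
      isOpen_Ioo.preimage (EuclideanSpace.proj i).continuous
  · intro i
    fin_cases i <;>
      simp [ex, ey, EuclideanSpace.single_apply] <;> norm_num

lemma uniqueDiffOn_unitSq : UniqueDiffOn ℝ unitSq :=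
  uniqueDiffOn_convex convex_unitSq interior_unitSq_nonempty

/-- Key lemma: each approach direction upstairs comes from one downstairs. -/
lemma exists_preimage_dir
    (ψ : EuclideanSpace ℝ (Fin 2) → EuclideanSpace ℝ (Fin 5))
    (hψc : ContinuousOn ψ unitSq)
    {p : EuclideanSpace ℝ (Fin 2)} (hp : p ∈ unitSq)
    {A : EuclideanSpace ℝ (Fin 2) →L[ℝ] EuclideanSpace ℝ (Fin 5)}
    (hder : HasFDerivWithinAt ψ A unitSq p)
    (hinj : ∀ x ∈ unitSq, ψ x = ψ p → x = p)
    (hA : ∀ v : EuclideanSpace ℝ (Fin 2), v ≠ 0 → A v ≠ 0)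
    (traj : ℕ → EuclideanSpace ℝ (Fin 2)) (htrajmem : ∀ i, traj i ∈ unitSq)
    {l : EuclideanSpace ℝ (Fin 5)}
    (hl : HasApproachDirection (Set.range fun i => ψ (traj i)) (ψ p) l) :
    ∃ m, HasApproachDirection (Set.range traj) p m ∧ l = ‖A m‖⁻¹ • A m := by
  obtain ⟨hlnorm, Q, hQmem, hQne, hQtend, hQdir⟩ := hl
  -- choose preimages
  have hchoice : ∀ k, ∃ n : ℕ, ψ (traj n) = Q k := fun k => by
    obtain ⟨n, hn⟩ := hQmem k; exact ⟨n, hn⟩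
  choose n hn using hchoice
  set q : ℕ → EuclideanSpace ℝ (Fin 2) := fun k => traj (n k) with hq_def
  have hqmem : ∀ k, q k ∈ unitSq := fun k => htrajmem (n k)
  have hψq : ∀ k, ψ (q k) = Q k := fun k => hn k
  have hqne : ∀ k, q k ≠ p := by
    intro k h
    exact hQne k (by rw [← hψq k, h])
  -- q tends to p by compactness + injectivity
  have hqtend : Tendsto q atTop (𝓝 p) := by
    apply tendsto_of_subseq_tendsto
    intro ns hns
    obtain ⟨a, ha, φ, hφ, hconv⟩ := isCompact_unitSq.tendsto_subseq
      (fun k => hqmem (ns k))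
    refine ⟨φ, ?_⟩
    have hconv' : Tendsto (fun k => q (ns (φ k))) atTop (𝓝[unitSq] a) :=
      tendsto_nhdsWithin_iff.2 ⟨hconv, Filter.Eventually.of_forall fun k => hqmem (ns (φ k))⟩
    have h1 : Tendsto (fun k => ψ (q (ns (φ k)))) atTop (𝓝 (ψ a)) :=
      Filter.Tendsto.comp (hψc a ha) hconv'
    have h2 : Tendsto (fun k => ψ (q (ns (φ k)))) atTop (𝓝 (ψ p)) := by
      have : Tendsto (fun k => Q (ns (φ k))) atTop (𝓝 (ψ p)) :=
        hQtend.comp ((hns.comp hφ.tendsto_atTop))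
      exact this.congr fun k => (hψq _).symm
    have : a = p := hinj a ha (tendsto_nhds_unique h1 h2)
    rwa [this] at hconv
  -- extract converging direction subsequence
  set u : ℕ → EuclideanSpace ℝ (Fin 2) := fun k => ‖q k - p‖⁻¹ • (q k - p) with hu_def
  have hunorm : ∀ k, u k ∈ Metric.sphere (0 : EuclideanSpace ℝ (Fin 2)) 1 := by
    intro k
    rw [mem_sphere_zero_iff_norm, hu_def, norm_smul, norm_inv, norm_norm]
    have : ‖q k - p‖ ≠ 0 := norm_ne_zero_iff.2 (sub_ne_zero.2 (hqne k))
    field_simp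
  obtain ⟨m, hm, φ, hφ, humtend⟩ :=
    (isCompact_sphere (0 : EuclideanSpace ℝ (Fin 2)) 1).tendsto_subseq hunorm
  have hmnorm : ‖m‖ = 1 := mem_sphere_zero_iff_norm.1 hm
  have hmne : m ≠ 0 := by intro h; rw [h, norm_zero] at hmnorm; norm_num at hmnorm
  have hAm : A m ≠ 0 := hA m hmne
  -- little-o estimate along the subsequence
  have hqφtend : Tendsto (fun k => q (φ k)) atTop (𝓝[unitSq] p) :=
    tendsto_nhdsWithin_iff.2 ⟨hqtend.comp hφ.tendsto_atTop,
      Filter.Eventually.of_forall fun k => hqmem (φ k)⟩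
  have hlo := hder.isLittleO.comp_tendsto hqφtend
  have h0 : Tendsto (fun k => ‖q (φ k) - p‖⁻¹ • (ψ (q (φ k)) - ψ p - A (q (φ k) - p)))
      atTop (𝓝 0) := by
    rw [tendsto_zero_iff_norm_tendsto_zero]
    have h1 := hlo.norm_norm.tendsto_div_nhds_zero
    refine h1.congr fun k => ?_
    simp [Function.comp, norm_smul, norm_inv, norm_norm, div_eq_inv_mul]
  have hAu : Tendsto (fun k => A (u (φ k))) atTop (𝓝 (A m)) :=
    (A.continuous.tendsto m).comp humtend
  have key : Tendsto (fun k => ‖q (φ k) - p‖⁻¹ • (ψ (q (φ k)) - ψ p))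
      atTop (𝓝 (A m)) := by
    have hsum := h0.add hAu
    rw [zero_add] at hsum
    refine hsum.congr fun k => ?_
    show _ + A (‖q (φ k) - p‖⁻¹ • (q (φ k) - p)) = _
    rw [map_smul, smul_sub (‖q (φ k) - p‖⁻¹) (ψ (q (φ k)) - ψ p) (A (q (φ k) - p))]
    abel
  -- the normalized images converge to the normalized A m
  have hcont : ContinuousAt (fun x : EuclideanSpace ℝ (Fin 5) => ‖x‖⁻¹ • x) (A m) := by
    exact ((continuous_norm.continuousAt).inv₀ (norm_ne_zero_iff.2 hAm)).smul continuousAt_id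
  have hdir2 : Tendsto (fun k =>
      ‖‖q (φ k) - p‖⁻¹ • (ψ (q (φ k)) - ψ p)‖⁻¹ • (‖q (φ k) - p‖⁻¹ • (ψ (q (φ k)) - ψ p)))
      atTop (𝓝 (‖A m‖⁻¹ • A m)) := hcont.tendsto.comp key
  have heq : ∀ k, ‖‖q (φ k) - p‖⁻¹ • (ψ (q (φ k)) - ψ p)‖⁻¹ •
      (‖q (φ k) - p‖⁻¹ • (ψ (q (φ k)) - ψ p)) = ‖Q (φ k) - ψ p‖⁻¹ • (Q (φ k) - ψ p) := by
    intro k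
    have hr : ‖q (φ k) - p‖ ≠ 0 := norm_ne_zero_iff.2 (sub_ne_zero.2 (hqne (φ k)))
    rw [← hψq (φ k)]
    rw [norm_smul, norm_inv, norm_norm, mul_inv, inv_inv, smul_smul]
    congr 1
    rw [mul_right_comm, mul_inv_cancel₀ hr, one_mul]
  have hdir3 : Tendsto (fun k => ‖Q (φ k) - ψ p‖⁻¹ • (Q (φ k) - ψ p))
      atTop (𝓝 (‖A m‖⁻¹ • A m)) := by
    refine hdir2.congr fun k => heq k
  have hdir4 : Tendsto (fun k => ‖Q (φ k) - ψ p‖⁻¹ • (Q (φ k) - ψ p)) atTop (𝓝 l) :=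
    hQdir.comp hφ.tendsto_atTop
  have hlval : l = ‖A m‖⁻¹ • A m := tendsto_nhds_unique hdir4 hdir3
  refine ⟨m, ⟨hmnorm, fun k => q (φ k), fun k => ⟨n (φ k), rfl⟩, fun k => hqne (φ k),
    hqtend.comp hφ.tendsto_atTop, humtend⟩, hlval⟩

theorem statement3
    (f : EuclideanSpace ℝ (Fin 2) → EuclideanSpace ℝ (Fin 2))
    (ψ : EuclideanSpace ℝ (Fin 2) → EuclideanSpace ℝ (Fin 5))
    (hfmaps : MapsTo f unitSq unitSq)
    (hf : ContDiffOn ℝ 3 f unitSq)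
    (hψ : ContDiffOn ℝ 3 ψ unitSq)
    (p : EuclideanSpace ℝ (Fin 2)) (hp : p ∈ unitSq)
    (P : EuclideanSpace ℝ (Fin 5)) (hP : P = ψ p)
    (hinj : ∀ x ∈ unitSq, ψ x = P → x = p)
    (hindep : LinearIndependent ℝ
      ![iteratedFDerivWithin ℝ 1 ψ unitSq p ![ex],
        iteratedFDerivWithin ℝ 1 ψ unitSq p ![ey],
        iteratedFDerivWithin ℝ 2 ψ unitSq p ![ex, ex],
        iteratedFDerivWithin ℝ 2 ψ unitSq p ![ex, ey],
        iteratedFDerivWithin ℝ 2 ψ unitSq p ![ey, ey]])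
    (traj : ℕ → EuclideanSpace ℝ (Fin 2)) (htrajmem : ∀ i, traj i ∈ unitSq)
    (htraj : ∀ i, traj (i + 1) = f (traj i))
    (d : ℕ)
    (happr : HasDistinctApproachDirections (Set.range fun i => ψ (traj i)) P d) :
    HasDistinctApproachDirections (Set.range traj) p d := by
  subst hP
  set A := fderivWithin ℝ ψ unitSq p with hA_def
  have hud : UniqueDiffWithinAt ℝ unitSq p := uniqueDiffOn_unitSq p hp
  have hder : HasFDerivWithinAt ψ A unitSq p :=
    ((hψ.differentiableOn (by norm_num)) p hp).hasFDerivWithinAt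
  -- linear independence of the first derivatives
  have hpair : LinearIndependent ℝ ![A ex, A ey] := by
    have hcomp := hindep.comp (![0, 1] : Fin 2 → Fin 5) (by decide)
    have hfun : (![iteratedFDerivWithin ℝ 1 ψ unitSq p ![ex],
        iteratedFDerivWithin ℝ 1 ψ unitSq p ![ey],
        iteratedFDerivWithin ℝ 2 ψ unitSq p ![ex, ex],
        iteratedFDerivWithin ℝ 2 ψ unitSq p ![ex, ey],
        iteratedFDerivWithin ℝ 2 ψ unitSq p ![ey, ey]] ∘ (![0, 1] : Fin 2 → Fin 5))
        = ![A ex, A ey] := by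
      funext i
      fin_cases i <;>
        simp [iteratedFDerivWithin_one_apply hud] <;> rfl
    rwa [hfun] at hcomp
  have hA : ∀ v : EuclideanSpace ℝ (Fin 2), v ≠ 0 → A v ≠ 0 := by
    intro v hv hAv
    have hrep : v = v 0 • ex + v 1 • ey := by
      ext i
      fin_cases i <;> simp [ex, ey, EuclideanSpace.single_apply]
    have h0 : v 0 • A ex + v 1 • A ey = 0 := by
      rw [← map_smul, ← map_smul, ← map_add, ← hrep, hAv]
    obtain ⟨h1, h2⟩ := LinearIndependent.pair_iff.1 hpair (v 0) (v 1) h0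
    apply hv
    rw [hrep, h1, h2, zero_smul, zero_smul, add_zero]
  obtain ⟨L, hL, hLdist⟩ := happr
  have hex : ∀ i : Fin d, ∃ m, HasApproachDirection (Set.range traj) p m ∧
      L i = ‖A m‖⁻¹ • A m := fun i =>
    exists_preimage_dir ψ hψ.continuousOn hp hder hinj hA traj htrajmem (hL i)
  choose m hm hrel using hex
  refine ⟨m, hm, fun i j hij => ?_⟩
  constructor
  · intro h
    exact (hLdist i j hij).1 (by rw [hrel i, hrel j, h])
  · intro h
    apply (hLdist i j hij).2
    rw [hrel i, hrel j, h, map_neg, norm_neg, smul_neg]
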